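/- Let d ≥ 3 and let G be a finite vertex-transitive d-regular simple graph containing a cycle, with girth g. Then for every vertex o and every k ≥ 1, the number of self-avoiding walks of length k from o satisfies |SAW_k(o,G)| ≤ d(d−1)^{k−1} · (1 − (d−1)^{−g})^{⌊k/g⌋}. -/

import Mathlib

open Filter Topology

/-- A self-avoiding walk from `o` in the graph `G`, encoded as the (nonempty) list of
visited vertices: it starts at `o`, consecutive vertices are adjacent, and no vertex is
visited more than once.  A list of length `k+1` corresponds to a walk with `k` edges. -/
def IsSAWFrom {V : Type*} (G : SimpleGraph V) (o : V) (l : List V) : Prop :=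
  l.head? = some o ∧ l.Chain' G.Adj ∧ l.Nodup

/-- `sawCount G o k = |SAW_k(o,G)|`, the number of self-avoiding walks from `o` with
exactly `k` edges. -/
noncomputable def sawCount {V : Type*} (G : SimpleGraph V) (o : V) (k : ℕ) : ℕ :=
  Nat.card {l : List V // IsSAWFrom G o l ∧ l.length = k + 1}

/-- The partition function `Z_{o,G}(x) = Σ_k |SAW_k(o,G)| x^k`.  Since a self-avoiding
walk in a graph on `|V|` vertices has at most `|V| - 1` edges, the sum over
`k < |V|` captures all nonzero terms. -/
noncomputable def sawZ {V : Type*} [Fintype V] (G : SimpleGraph V) (o : V) (x : ℝ) : ℝ :=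
  ∑ k ∈ Finset.range (Fintype.card V), (sawCount G o k : ℝ) * x ^ k

/-- The expected length `L(x,o,G) = Z_{o,G}(x)⁻¹ Σ_k k |SAW_k(o,G)| x^k`. -/
noncomputable def sawL {V : Type*} [Fintype V] (G : SimpleGraph V) (o : V) (x : ℝ) : ℝ :=
  (sawZ G o x)⁻¹ *
    ∑ k ∈ Finset.range (Fintype.card V), (k : ℝ) * (sawCount G o k : ℝ) * x ^ k

/-- The number of pairs `(ω, ω')` of self-avoiding walks from `o`, with `k` resp. `j`
edges, whose vertex sets intersect exactly in `{o}`. -/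
noncomputable def sawPairCount {V : Type*} (G : SimpleGraph V) (o : V) (k j : ℕ) : ℕ :=
  Nat.card {p : List V × List V //
    (IsSAWFrom G o p.1 ∧ p.1.length = k + 1) ∧
    (IsSAWFrom G o p.2 ∧ p.2.length = j + 1) ∧
    {v | v ∈ p.1 ∧ v ∈ p.2} = {o}}

/-- The trivial-intersection probability
`I(x,o,G) = Z_{o,G}(x)⁻² Σ x^{|ω|+|ω'|}`, summed over pairs of self-avoiding walks
from `o` whose vertex sets meet only in `o`. -/
noncomputable def sawI {V : Type*} [Fintype V] (G : SimpleGraph V) (o : V) (x : ℝ) : ℝ :=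
  ((sawZ G o x) ^ 2)⁻¹ *
    ∑ k ∈ Finset.range (Fintype.card V), ∑ j ∈ Finset.range (Fintype.card V),
      (sawPairCount G o k j : ℝ) * x ^ (k + j)

/-- The finite-graph critical exponent `γ(x,o,G) = log Z_{o,G}(x) / log (L(x,o,G) + 1)`. -/
noncomputable def sawGamma {V : Type*} [Fintype V] (G : SimpleGraph V) (o : V) (x : ℝ) : ℝ :=
  Real.log (sawZ G o x) / Real.log (sawL G o x + 1)

/-- A graph is vertex-transitive if its automorphism group acts transitively on vertices. -/
def SimpleGraph.VertexTransitive {V : Type*} (G : SimpleGraph V) : Prop :=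
  ∀ u v : V, ∃ φ : G ≃g G, φ u = v

/-- A graph is `d`-regular: every vertex has exactly `d` neighbours. -/
def SawRegular {V : Type*} (G : SimpleGraph V) (d : ℕ) : Prop :=
  ∀ v : V, Nat.card (G.neighborSet v) = d

/-- `(x n)` is super-critical for the rooted family `(G n, o n)`:
`liminf_n Z_{o_n, G_n}(x_n) = ∞`, i.e. `Z` tends to infinity. -/
def SawSuperCritical {V : ℕ → Type*} [∀ n, Fintype (V n)]
    (G : ∀ n, SimpleGraph (V n)) (o : ∀ n, V n) (x : ℕ → ℝ) : Prop :=
  Tendsto (fun n => sawZ (G n) (o n) (x n)) atTop atTop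

/-- `(x n)` is sub-critical for the rooted family `(G n, o n)`:
`limsup_n Z_{o_n, G_n}(x_n) < ∞`, i.e. the sequence of partition functions is bounded. -/
def SawSubCritical {V : ℕ → Type*} [∀ n, Fintype (V n)]
    (G : ∀ n, SimpleGraph (V n)) (o : ∀ n, V n) (x : ℕ → ℝ) : Prop :=
  BddAbove (Set.range fun n => sawZ (G n) (o n) (x n))

/-- `(x n)` is critical: for every `0 < ε < 1`, `(x n (1+ε))` is super-critical and
`(x n (1-ε))` is sub-critical. -/
def SawCritical {V : ℕ → Type*} [∀ n, Fintype (V n)]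
    (G : ∀ n, SimpleGraph (V n)) (o : ∀ n, V n) (x : ℕ → ℝ) : Prop :=
  ∀ ε : ℝ, 0 < ε → ε < 1 →
    SawSuperCritical G o (fun n => x n * (1 + ε)) ∧
    SawSubCritical G o (fun n => x n * (1 - ε))

/-- `Z_{K_n}(x)` for the complete graph `K_n` on `n` vertices, rooted at an arbitrary
vertex (all choices agree by symmetry); junk value `0` for `n = 0`. -/
noncomputable def completeZ (n : ℕ) (x : ℝ) : ℝ :=
  if h : 0 < n then sawZ (⊤ : SimpleGraph (Fin n)) ⟨0, h⟩ x else 0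

/-- `L(x, K_n)` for the complete graph `K_n`; junk value `0` for `n = 0`. -/
noncomputable def completeL (n : ℕ) (x : ℝ) : ℝ :=
  if h : 0 < n then sawL (⊤ : SimpleGraph (Fin n)) ⟨0, h⟩ x else 0

/-- `I(x, K_n)` for the complete graph `K_n`; junk value `0` for `n = 0`. -/
noncomputable def completeI (n : ℕ) (x : ℝ) : ℝ :=
  if h : 0 < n then sawI (⊤ : SimpleGraph (Fin n)) ⟨0, h⟩ x else 0

/-- `γ(x, K_n)` for the complete graph `K_n`; junk value `0` for `n = 0`. -/
noncomputable def completeGamma (n : ℕ) (x : ℝ) : ℝ :=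
  if h : 0 < n then sawGamma (⊤ : SimpleGraph (Fin n)) ⟨0, h⟩ x else 0

/-- A non-backtracking walk in `G`, encoded as the list of visited vertices:
consecutive vertices are adjacent and `ω_{j+2} ≠ ω_j` for all `j`. -/
def IsNBWalk {V : Type*} (G : SimpleGraph V) (l : List V) : Prop :=
  l.Chain' G.Adj ∧ ∀ i, i + 2 < l.length → l[i]? ≠ l[i + 2]?

/-- The number of non-backtracking walks of length `t` from `u` to `v`. -/
noncomputable def nbCount {V : Type*} (G : SimpleGraph V) (u v : V) (t : ℕ) : ℕ :=
  Nat.card {l : List V //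
    IsNBWalk G l ∧ l.length = t + 1 ∧ l.head? = some u ∧ l.getLast? = some v}

/-- `p_t(u,v)`: the number of non-backtracking walks of length `t` from `u` to `v`
divided by `d(d-1)^{t-1}`, i.e. the probability that the non-backtracking random walk
on a `d`-regular graph started at `u` is at `v` at time `t`. -/
noncomputable def nbProb {V : Type*} (G : SimpleGraph V) (d : ℕ) (u v : V) (t : ℕ) : ℝ :=
  (nbCount G u v t : ℝ) / (d * ((d : ℝ) - 1) ^ (t - 1))

/-- The mixing time of the non-backtracking random walk on the `d`-regular graph `G`
with `N` vertices: the least `t ≥ 1` with `|p_t(u,v) - 1/N| ≤ 1/(2N)` for all `u, v`. -/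
noncomputable def nbMixingTime {V : Type*} [Fintype V] (G : SimpleGraph V) (d : ℕ) : ℕ :=
  sInf {t : ℕ | 1 ≤ t ∧ ∀ u v : V,
    |nbProb G d u v t - 1 / (Fintype.card V : ℝ)| ≤ 1 / (2 * (Fintype.card V : ℝ))}


namespace SawAux

variable {V : Type*} (G : SimpleGraph V)

/-- Non-backtracking continuation predicate: steps from `v`, previous vertex `prev`. -/
def NbExt : V → V → List V → Prop
  | _, _, [] => True
  | prev, v, u :: l => G.Adj v u ∧ u ≠ prev ∧ NbExt v u l

/-- Non-backtracking continuation with no previous vertex. -/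
def NbExt0 : V → List V → Prop
  | _, [] => True
  | v, u :: l => G.Adj v u ∧ NbExt G v u l

variable [Fintype V] [DecidableEq V] [DecidableRel G.Adj]

def nbFin (prev v : V) : ℕ → Finset (List V)
  | 0 => {[]}
  | m + 1 => ((G.neighborFinset v).erase prev).biUnion
      fun u => ((nbFin v u m).image (u :: ·))

def nbFin0 (v : V) (m : ℕ) : Finset (List V) :=
  match m with
  | 0 => {[]}
  | m + 1 => (G.neighborFinset v).biUnion fun u => ((nbFin G v u m).image (u :: ·))

lemma mem_nbFin : ∀ (m : ℕ) (prev v : V) (l : List V),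
    l ∈ nbFin G prev v m ↔ l.length = m ∧ NbExt G prev v l := by
  intro m
  induction m with
  | zero =>
    intro prev v l
    constructor
    · intro h
      simp only [nbFin, Finset.mem_singleton] at h
      subst h; exact ⟨rfl, trivial⟩
    · intro ⟨h1, _⟩
      simp only [nbFin, Finset.mem_singleton]
      exact List.length_eq_zero_iff.mp h1
  | succ m ih =>
    intro prev v l
    simp only [nbFin, Finset.mem_biUnion, Finset.mem_image, Finset.mem_erase,
      SimpleGraph.mem_neighborFinset]
    constructor
    · rintro ⟨u, ⟨hne, hadj⟩, t, ht, rfl⟩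
      obtain ⟨hlen, hnb⟩ := (ih v u t).mp ht
      exact ⟨by simp [hlen], hadj, hne, hnb⟩
    · intro ⟨hlen, hnb⟩
      cases l with
      | nil => simp at hlen
      | cons u t =>
        obtain ⟨hadj, hne, hnb'⟩ := hnb
        exact ⟨u, ⟨hne, hadj⟩, t, (ih v u t).mpr ⟨by simpa using hlen, hnb'⟩, rfl⟩

lemma mem_nbFin0 (m : ℕ) (v : V) (l : List V) :
    l ∈ nbFin0 G v m ↔ l.length = m ∧ NbExt0 G v l := by
  cases m with
  | zero =>
    constructor
    · intro h
      simp only [nbFin0, Finset.mem_singleton] at h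
      subst h; exact ⟨rfl, trivial⟩
    · intro ⟨h1, _⟩
      simp only [nbFin0, Finset.mem_singleton]
      exact List.length_eq_zero_iff.mp h1
  | succ m =>
    simp only [nbFin0, Finset.mem_biUnion, Finset.mem_image,
      SimpleGraph.mem_neighborFinset]
    constructor
    · rintro ⟨u, hadj, t, ht, rfl⟩
      obtain ⟨hlen, hnb⟩ := (mem_nbFin G m v u t).mp ht
      exact ⟨by simp [hlen], hadj, hnb⟩
    · intro ⟨hlen, hnb⟩
      cases l with
      | nil => simp at hlen
      | cons u t =>
        obtain ⟨hadj, hnb'⟩ := hnb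
        exact ⟨u, hadj, t, (mem_nbFin G m v u t).mpr ⟨by simpa using hlen, hnb'⟩, rfl⟩

variable {d : ℕ}

lemma card_neighborFinset (hreg : SawRegular G d) (v : V) :
    (G.neighborFinset v).card = d := by
  have := hreg v
  rwa [Nat.card_eq_fintype_card, ← Set.toFinset_card] at this

lemma card_nbFin (hreg : SawRegular G d) :
    ∀ (m : ℕ) (prev v : V), G.Adj prev v → (nbFin G prev v m).card ≤ (d - 1) ^ m := by
  intro m
  induction m with
  | zero => intro prev v _; simp [nbFin]
  | succ m ih =>
    intro prev v hadj
    refine le_trans Finset.card_biUnion_le ?_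
    have hcard : ((G.neighborFinset v).erase prev).card = d - 1 := by
      rw [Finset.card_erase_of_mem (by simpa using hadj.symm), card_neighborFinset G hreg]
    calc ∑ u ∈ (G.neighborFinset v).erase prev, ((nbFin G v u m).image (u :: ·)).card
        ≤ ∑ u ∈ (G.neighborFinset v).erase prev, (d - 1) ^ m := by
          refine Finset.sum_le_sum fun u hu => ?_
          refine le_trans Finset.card_image_le (ih v u ?_)
          exact (SimpleGraph.mem_neighborFinset ..).mp (Finset.mem_of_mem_erase hu)
      _ = (d - 1) ^ (m + 1) := by rw [Finset.sum_const, hcard, smul_eq_mul, pow_succ, mul_comm]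

lemma card_nbFin0 (hreg : SawRegular G d) (m : ℕ) (v : V) :
    (nbFin0 G v (m + 1)).card ≤ d * (d - 1) ^ m := by
  refine le_trans Finset.card_biUnion_le ?_
  calc ∑ u ∈ G.neighborFinset v, ((nbFin G v u m).image (u :: ·)).card
      ≤ ∑ u ∈ G.neighborFinset v, (d - 1) ^ m := by
        refine Finset.sum_le_sum fun u hu => ?_
        exact le_trans Finset.card_image_le
          (card_nbFin G hreg m v u ((SimpleGraph.mem_neighborFinset ..).mp hu))
    _ = d * (d - 1) ^ m := by
        rw [Finset.sum_const, card_neighborFinset G hreg, smul_eq_mul]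

end SawAux

namespace SawAux

section
variable {V : Type*} (G : SimpleGraph V)

/-- If a list is an adjacency chain from `v`, has no duplicates, avoids `prev` at its head
and `v` at its second element, then it is a non-backtracking continuation. -/
lemma nbExt_of : ∀ (prev v : V) (t : List V), List.Chain G.Adj v t → t.Nodup →
    (∀ a, t.head? = some a → a ≠ prev) → (∀ a, t.tail.head? = some a → a ≠ v) →
    NbExt G prev v t := by
  intro prev v t
  induction t generalizing prev v with
  | nil => intro _ _ _ _; trivial
  | cons u s ih =>
    intro hchain hnd hhead hv
    change List.IsChain G.Adj (v :: u :: s) at hchain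
    rw [List.isChain_cons_cons] at hchain
    refine ⟨hchain.1, hhead u rfl, ih v u hchain.2 hnd.of_cons ?_ ?_⟩
    · intro a ha
      exact hv a (by simpa using ha)
    · intro a ha
      intro h; subst h
      exact (List.nodup_cons.mp hnd).1 (List.mem_of_mem_tail (List.mem_of_mem_head? ha))

lemma nbExt0_of (v : V) (t : List V) (hchain : List.Chain G.Adj v t) (hnd : t.Nodup)
    (hv : ∀ a, t.tail.head? = some a → a ≠ v) : NbExt0 G v t := by
  cases t with
  | nil => trivial
  | cons u s =>
    change List.IsChain G.Adj (v :: u :: s) at hchain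
    rw [List.isChain_cons_cons] at hchain
    refine ⟨hchain.1, nbExt_of G v u s hchain.2 hnd.of_cons (fun a ha => hv a (by simpa using ha))
      ?_⟩
    intro a ha h; subst h
    exact (List.nodup_cons.mp hnd).1 (List.mem_of_mem_tail (List.mem_of_mem_head? ha))

lemma head_ne_getLast (l : List V) (hnd : l.Nodup) (hl : 2 ≤ l.length)
    (h1 : l ≠ []) : l.head h1 ≠ l.getLast h1 := by
  cases l with
  | nil => simp at hl
  | cons a m =>
    have hm : m ≠ [] := by
      intro h; subst h; simp at hl
    rw [List.getLast_cons hm, List.head_cons]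
    intro h
    exact (List.nodup_cons.mp hnd).1 (h ▸ List.getLast_mem hm)

end

section
variable {V : Type*} (G : SimpleGraph V) [Fintype V] [DecidableEq V] [DecidableRel G.Adj]

def listFin : ℕ → Finset (List V)
  | 0 => {[]}
  | m + 1 => Finset.univ.biUnion fun u : V => ((listFin m).image (u :: ·))

lemma mem_listFin : ∀ (m : ℕ) (l : List V), l ∈ listFin (V := V) m ↔ l.length = m := by
  intro m
  induction m with
  | zero =>
    intro l
    simp only [listFin, Finset.mem_singleton, List.length_eq_zero_iff]
  | succ m ih =>
    intro l
    simp only [listFin, Finset.mem_biUnion, Finset.mem_univ, Finset.mem_image, true_and]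
    constructor
    · rintro ⟨u, t, ht, rfl⟩
      simp [(ih t).mp ht]
    · intro hlen
      cases l with
      | nil => simp at hlen
      | cons u t => exact ⟨u, t, (ih t).mpr (by simpa using hlen), rfl⟩

instance instDecChainPrime {α : Type*} (R : α → α → Prop) [DecidableRel R] (l : List α) :
    Decidable (List.Chain' R l) := inferInstanceAs (Decidable (List.IsChain R l))

/-- Finset of self-avoiding extensions of the path `q` by `m` further vertices. -/
def extFin (q : List V) (m : ℕ) : Finset (List V) :=
  (listFin (V := V) m).filter fun t => ((q ++ t).Chain' G.Adj ∧ (q ++ t).Nodup)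

lemma mem_extFin {q : List V} {m : ℕ} {t : List V} :
    t ∈ extFin G q m ↔ t.length = m ∧ (q ++ t).Chain' G.Adj ∧ (q ++ t).Nodup := by
  simp [extFin, Finset.mem_filter, mem_listFin, and_assoc]

/-- Each extension of `q₀ ++ [prev, v]` is a non-backtracking continuation from `(prev, v)`. -/
lemma extFin_subset_nbFin (q₀ : List V) (prev v : V) (m : ℕ) :
    extFin G (q₀ ++ [prev, v]) m ⊆ nbFin G prev v m := by
  intro r hr
  rw [mem_extFin] at hr
  obtain ⟨hlen, hchain, hnd⟩ := hr
  rw [mem_nbFin]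
  have hassoc : q₀ ++ [prev, v] ++ r = (q₀ ++ [prev]) ++ (v :: r) := by
    simp [List.append_assoc]
  rw [hassoc] at hchain hnd
  have hchain' : List.Chain G.Adj v r := (hchain.suffix ⟨q₀ ++ [prev], rfl⟩ : List.Chain' _ _)
  have hdisj := List.disjoint_of_nodup_append hnd
  have hndr : (v :: r).Nodup := (List.nodup_append.mp hnd).2.1
  refine ⟨hlen, nbExt_of G prev v r hchain' hndr.of_cons ?_ ?_⟩
  · intro a ha h; subst h
    exact hdisj (by simp : a ∈ q₀ ++ [a]) (List.mem_cons_of_mem _ (List.mem_of_mem_head? ha))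
  · intro a ha h; subst h
    exact (List.nodup_cons.mp hndr).1 (List.mem_of_mem_tail (List.mem_of_mem_head? ha))

lemma extFin_subset_nbFin0 (o : V) (m : ℕ) :
    extFin G [o] m ⊆ nbFin0 G o m := by
  intro r hr
  rw [mem_extFin] at hr
  obtain ⟨hlen, hchain, hnd⟩ := hr
  rw [mem_nbFin0]
  have hchain' : List.Chain G.Adj o r := hchain
  have hndr : (o :: r).Nodup := hnd
  refine ⟨hlen, nbExt0_of G o r hchain' hndr.of_cons ?_⟩
  intro a ha h; subst h
  exact (List.nodup_cons.mp hndr).1 (List.mem_of_mem_tail (List.mem_of_mem_head? ha))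

end
end SawAux

namespace SawAux
section
variable {V : Type*} {G : SimpleGraph V}

/-- A traversal of a girth cycle based at `v`, recorded as the list of vertices after `v`. -/
def GoodTail (G : SimpleGraph V) (v : V) (t : List V) : Prop :=
  t.length = G.girth ∧ List.Chain G.Adj v t ∧ t.Nodup ∧ t.getLast? = some v

lemma exists_cycle_tail (hG : ∀ u v : V, ∃ φ : G ≃g G, φ u = v) (hcyc : ¬ G.IsAcyclic)
    (v : V) : ∃ t : List V, GoodTail G v t := by
  obtain ⟨a, w, hw, hlen⟩ := (SimpleGraph.exists_girth_eq_length).mpr hcyc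
  obtain ⟨φ, hφ⟩ := hG a v
  subst hφ
  have hic : (w.map φ.toHom).IsCycle := hw.map (f := φ.toHom) (fun x y h => φ.injective h)
  set w' := w.map φ.toHom with hw'
  have hlen' : w'.support.tail.length = G.girth := by
    have h1 : w'.support.length = w'.length + 1 := SimpleGraph.Walk.length_support w'
    have h2 : w'.length = w.length := SimpleGraph.Walk.length_map _ _
    rw [List.length_tail, h1, h2, ← hlen]
    omega
  have htne : w'.support.tail ≠ [] := by
    intro h
    rw [h] at hlen'
    have := SimpleGraph.three_le_girth hcyc
    simp at hlen'; omega
  refine ⟨w'.support.tail, hlen', ?_, hic.support_nodup, ?_⟩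
  · have hch := w'.isChain_adj_support
    rw [w'.support_eq_cons] at hch
    exact hch
  · obtain ⟨b, rest, hbt⟩ : ∃ b rest, w'.support.tail = b :: rest := by
      cases hh : w'.support.tail with
      | nil => exact absurd hh htne
      | cons b rest => exact ⟨b, rest, rfl⟩
    have h4 : w'.support.getLast? = some (φ a) := by
      have hgl := SimpleGraph.Walk.getLast_support w'
      rw [List.getLast?_eq_getLast (SimpleGraph.Walk.support_ne_nil w')]
      exact congrArg some hgl
    have h5 : (φ a :: w'.support.tail).getLast? = some (φ a) := by
      rw [← SimpleGraph.Walk.support_eq_cons]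
      exact h4
    rw [hbt] at h5 ⊢
    rwa [List.getLast?_cons_cons] at h5

lemma exists_two_tails (hG : ∀ u v : V, ∃ φ : G ≃g G, φ u = v) (hcyc : ¬ G.IsAcyclic)
    (v : V) : ∃ t t' : List V, GoodTail G v t ∧ GoodTail G v t' ∧
      ∃ a a', t.head? = some a ∧ t'.head? = some a' ∧ a ≠ a' := by
  obtain ⟨t, hlen, hchain, hnd, hlast⟩ := exists_cycle_tail hG hcyc v
  have hg3 : 3 ≤ G.girth := SimpleGraph.three_le_girth hcyc
  have htne : t ≠ [] := by
    intro h; rw [h] at hlen; simp at hlen; omega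
  have hlast' : t.getLast htne = v := by
    rw [List.getLast?_eq_getLast htne] at hlast
    exact Option.some_injective _ hlast
  have hteq : t.dropLast ++ [v] = t := by
    conv_rhs => rw [← List.dropLast_append_getLast htne]
    rw [hlast']
  set t' := t.dropLast.reverse ++ [v] with ht'
  have hndd : t.dropLast.Nodup ∧ v ∉ t.dropLast := by
    have := hteq ▸ hnd
    rw [List.nodup_append] at this
    exact ⟨this.1, fun hv => this.2.2 v hv v (by simp) rfl⟩
  have ht'len : t'.length = G.girth := by
    rw [ht', List.length_append, List.length_reverse, List.length_dropLast]
    simp only [List.length_singleton]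
    omega
  have hrevcons : (v :: t).reverse = v :: t' := by
    rw [ht']
    conv_lhs => rw [← hteq]
    simp
  have ht'chain : List.Chain G.Adj v t' := by
    have h1 : List.Chain' (flip G.Adj) (v :: t) :=
      List.IsChain.imp (R := G.Adj) (fun a b h => h.symm)
        (show List.Chain' G.Adj (v :: t) from hchain)
    have h2 : List.Chain' G.Adj ((v :: t).reverse) := List.isChain_reverse.mpr h1
    rw [hrevcons] at h2
    exact h2
  have ht'nd : t'.Nodup := by
    rw [ht', List.nodup_append]
    refine ⟨List.nodup_reverse.mpr hndd.1, List.nodup_singleton v, ?_⟩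
    intro x hx y hy hxy
    simp only [List.mem_singleton] at hy
    rw [hy] at hxy
    rw [hxy] at hx
    exact hndd.2 (List.mem_reverse.mp hx)
  have ht'last : t'.getLast? = some v := List.getLast?_concat
  obtain ⟨a, s, rfl⟩ : ∃ a s, t = a :: s := by
    cases t with
    | nil => exact absurd rfl htne
    | cons a s => exact ⟨a, s, rfl⟩
  cases hdd : t'.head? with
  | none =>
    exfalso
    have : t' ≠ [] := by
      intro h; rw [h] at ht'len; simp at ht'len; omega
    rw [List.head?_eq_head this] at hdd
    simp at hdd
  | some b =>
    refine ⟨a :: s, t', ⟨hlen, hchain, hnd, hlast⟩, ⟨ht'len, ht'chain, ht'nd, ht'last⟩,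
      a, b, rfl, hdd, ?_⟩
    intro hab
    subst hab
    -- now a is also the head of t' = dropLast.reverse ++ [v]
    cases hdl : (a :: s).dropLast.reverse with
    | nil =>
      have : (a :: s).dropLast.length = 0 := by
        rw [← List.length_reverse, hdl]; rfl
      rw [List.length_dropLast] at this
      simp at this
      rw [this] at hlen
      simp at hlen; omega
    | cons c m =>
      have hb : t'.head? = some c := by rw [ht', hdl]; rfl
      rw [hdd] at hb
      have hac : a = c := by injection hb
      subst hac
      have hdl2 : (a :: s).dropLast = m.reverse ++ [a] := by
        rw [← List.reverse_reverse ((a :: s).dropLast), hdl]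
        simp
      have hts : a :: s = m.reverse ++ [a] ++ [v] := by
        rw [← hdl2, hteq]
      cases hm : m.reverse with
      | nil =>
        rw [hm] at hts
        simp only [List.nil_append] at hts
        have : s = [v] := by
          have := congrArg List.tail hts
          simpa using this
        rw [this] at hlen
        simp at hlen
        omega
      | cons c2 m2 =>
        rw [hm] at hts
        have : a = c2 ∧ s = m2 ++ [a] ++ [v] := by
          constructor
          · have := congrArg List.head? hts
            simpa using this
          · have := congrArg List.tail hts
            simpa using this
        obtain ⟨rfl, hs⟩ := this
        have : a ∈ s := by rw [hs]; simp
        exact (List.nodup_cons.mp hnd).1 this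

end
end SawAux

namespace SawAux
section
variable {V : Type*} {G : SimpleGraph V} [Fintype V] [DecidableEq V] [DecidableRel G.Adj]
  {d : ℕ}

lemma GoodTail.v_mem {v : V} {t : List V} (hg : GoodTail G v t) : v ∈ t := by
  obtain ⟨_, _, _, hlast⟩ := hg
  obtain ⟨h, rfl⟩ := List.mem_getLast?_eq_getLast hlast
  exact List.getLast_mem h

lemma GoodTail.snd_ne (hcyc : ¬ G.IsAcyclic) {v : V} {t : List V} (hg : GoodTail G v t) :
    ∀ a, t.tail.head? = some a → a ≠ v := by
  obtain ⟨hlen, hchain, hnd, hlast⟩ := hg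
  have hg3 : 3 ≤ G.girth := SimpleGraph.three_le_girth hcyc
  cases t with
  | nil => simp at hlen; omega
  | cons c s =>
    intro a ha
    have hsne : s ≠ [] := by
      intro h; rw [h] at hlen; simp at hlen; omega
    have hsl : s.getLast hsne = v := by
      rw [List.getLast?_eq_getLast (by simp : (c :: s) ≠ [])] at hlast
      have := Option.some_injective _ hlast
      rwa [List.getLast_cons hsne] at this
    have hha : a = s.head hsne := by
      simp only [List.tail_cons] at ha
      rw [List.head?_eq_head hsne] at ha
      exact (Option.some_injective _ ha).symm
    rw [hha, ← hsl]
    exact head_ne_getLast s (List.nodup_cons.mp hnd).2 (by simp at hlen ⊢; omega) hsne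

lemma GoodTail.mem_nbFin (hcyc : ¬ G.IsAcyclic) {v : V} {t : List V} (prev : V)
    (hg : GoodTail G v t) (hhead : ∀ a, t.head? = some a → a ≠ prev) :
    t ∈ nbFin G prev v G.girth := by
  rw [SawAux.mem_nbFin G]
  exact ⟨hg.1, nbExt_of G prev v t hg.2.1 hg.2.2.1 hhead (hg.snd_ne hcyc)⟩

lemma GoodTail.mem_nbFin0 (hcyc : ¬ G.IsAcyclic) {v : V} {t : List V}
    (hg : GoodTail G v t) : t ∈ nbFin0 G v G.girth := by
  rw [SawAux.mem_nbFin0 G]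
  exact ⟨hg.1, nbExt0_of G v t hg.2.1 hg.2.2.1 (hg.snd_ne hcyc)⟩

lemma card_extFin_pair (hG : ∀ u v : V, ∃ φ : G ≃g G, φ u = v) (hcyc : ¬ G.IsAcyclic)
    (hreg : SawRegular G d) (q₀ : List V) (prev v : V)
    (hchain : (q₀ ++ [prev, v]).Chain' G.Adj) (hnd : (q₀ ++ [prev, v]).Nodup) :
    (extFin G (q₀ ++ [prev, v]) G.girth).card ≤ (d - 1) ^ G.girth - 1 := by
  have hadj : G.Adj prev v := by
    have h2 : List.Chain' G.Adj [prev, v] := hchain.suffix ⟨q₀, rfl⟩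
    exact (List.isChain_pair.mp h2)
  obtain ⟨t, t', hg, hg', a, a', ha, ha', hne⟩ := exists_two_tails hG hcyc v
  suffices h : ∀ c : List V, GoodTail G v c → (∀ b, c.head? = some b → b ≠ prev) →
      (extFin G (q₀ ++ [prev, v]) G.girth).card ≤ (d - 1) ^ G.girth - 1 by
    by_cases hap : a = prev
    · refine h t' hg' ?_
      intro b hb
      rw [ha'] at hb
      have hb2 : a' = b := Option.some_injective _ hb
      subst hb2; subst hap
      exact fun hh => hne hh.symm
    · refine h t hg ?_
      intro b hb
      rw [ha] at hb
      have hb2 : a = b := Option.some_injective _ hb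
      subst hb2
      exact hap
  intro c hgc hheadc
  have hcmem : c ∈ nbFin G prev v G.girth := hgc.mem_nbFin hcyc prev hheadc
  have hsub : extFin G (q₀ ++ [prev, v]) G.girth ⊆ (nbFin G prev v G.girth).erase c := by
    intro r hr
    rw [Finset.mem_erase]
    refine ⟨?_, extFin_subset_nbFin G q₀ prev v G.girth hr⟩
    rw [mem_extFin] at hr
    have hdisj := List.disjoint_of_nodup_append hr.2.2
    intro hrc
    subst hrc
    exact hdisj (by simp : v ∈ q₀ ++ [prev, v]) hgc.v_mem
  calc (extFin G (q₀ ++ [prev, v]) G.girth).card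
      ≤ ((nbFin G prev v G.girth).erase c).card := Finset.card_le_card hsub
    _ = (nbFin G prev v G.girth).card - 1 := Finset.card_erase_of_mem hcmem
    _ ≤ (d - 1) ^ G.girth - 1 :=
        Nat.sub_le_sub_right (card_nbFin G hreg G.girth prev v hadj) 1

lemma card_extFin_single (hG : ∀ u v : V, ∃ φ : G ≃g G, φ u = v) (hcyc : ¬ G.IsAcyclic)
    (hreg : SawRegular G d) (o : V) :
    (extFin G [o] G.girth).card ≤ d * (d - 1) ^ (G.girth - 1) - 2 := by
  obtain ⟨t, t', hg, hg', a, a', ha, ha', hne⟩ := exists_two_tails hG hcyc o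
  have htne : t ≠ t' := by
    intro h
    rw [h, ha'] at ha
    exact hne (Option.some_injective _ ha).symm
  have hmem : t ∈ nbFin0 G o G.girth := hg.mem_nbFin0 hcyc
  have hmem' : t' ∈ nbFin0 G o G.girth := hg'.mem_nbFin0 hcyc
  have hsub : extFin G [o] G.girth ⊆ ((nbFin0 G o G.girth).erase t).erase t' := by
    intro r hr
    have hrmem := extFin_subset_nbFin0 G o G.girth hr
    rw [mem_extFin] at hr
    have hor : o ∉ r := by
      have : (o :: r).Nodup := hr.2.2
      exact (List.nodup_cons.mp this).1
    rw [Finset.mem_erase, Finset.mem_erase]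
    refine ⟨?_, ?_, hrmem⟩
    · intro h; subst h; exact hor hg'.v_mem
    · intro h; subst h; exact hor hg.v_mem
  have ht'et : t' ∈ (nbFin0 G o G.girth).erase t := Finset.mem_erase.mpr ⟨htne.symm, hmem'⟩
  have hcard0 : (nbFin0 G o G.girth).card ≤ d * (d - 1) ^ (G.girth - 1) := by
    have hg3 : 3 ≤ G.girth := SimpleGraph.three_le_girth hcyc
    have : G.girth = (G.girth - 1) + 1 := by omega
    rw [this]
    exact card_nbFin0 G hreg (G.girth - 1) o
  calc (extFin G [o] G.girth).card
      ≤ (((nbFin0 G o G.girth).erase t).erase t').card := Finset.card_le_card hsub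
    _ = ((nbFin0 G o G.girth).erase t).card - 1 := Finset.card_erase_of_mem ht'et
    _ = (nbFin0 G o G.girth).card - 1 - 1 := by rw [Finset.card_erase_of_mem hmem]
    _ ≤ d * (d - 1) ^ (G.girth - 1) - 2 := by omega

end
end SawAux

namespace SawAux
section
variable {V : Type*} {G : SimpleGraph V} [Fintype V] [DecidableEq V] [DecidableRel G.Adj]
  {d : ℕ}

lemma two_last (l : List V) (h : 2 ≤ l.length) : ∃ q₀ a b, l = q₀ ++ [a, b] := by
  cases hrev : l.reverse with
  | nil =>
    have hl : l.length = 0 := by rw [← List.length_reverse (as := l), hrev]; rfl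
    omega
  | cons b m =>
    cases m with
    | nil =>
      have hl : l.length = 1 := by rw [← List.length_reverse (as := l), hrev]; rfl
      omega
    | cons a m' =>
      refine ⟨m'.reverse, a, b, ?_⟩
      have : l = l.reverse.reverse := (List.reverse_reverse l).symm
      rw [this, hrev]
      simp

lemma base_card (hreg : SawRegular G d) (o : V) (k : ℕ) (hk : 1 ≤ k) :
    (extFin G [o] k).card ≤ d * (d - 1) ^ (k - 1) := by
  refine le_trans (Finset.card_le_card (extFin_subset_nbFin0 G o k)) ?_
  have : k = (k - 1) + 1 := by omega
  rw [this]
  exact card_nbFin0 G hreg (k - 1) o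

lemma step_card (hG : ∀ u v : V, ∃ φ : G ≃g G, φ u = v) (hcyc : ¬ G.IsAcyclic)
    (hreg : SawRegular G d) (o : V) (k : ℕ) (hk : G.girth + 1 ≤ k) :
    (extFin G [o] k).card ≤
      ((d - 1) ^ G.girth - 1) * (extFin G [o] (k - G.girth)).card := by
  have hg3 : 3 ≤ G.girth := SimpleGraph.three_le_girth hcyc
  have hle : k - G.girth ≤ k := Nat.sub_le _ _
  refine le_trans (Finset.card_le_mul_card_image_of_maps_to
    (f := fun t => t.take (k - G.girth)) (t := extFin G [o] (k - G.girth)) ?_ _ ?_)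
    (le_of_eq rfl)
  · -- maps to
    intro t ht
    rw [mem_extFin] at ht ⊢
    obtain ⟨hlen, hchain, hnd⟩ := ht
    have hpre : [o] ++ t.take (k - G.girth) <+: [o] ++ t := by
      obtain ⟨r, hr⟩ := t.take_prefix (k - G.girth)
      exact ⟨r, by rw [List.append_assoc, hr]⟩
    refine ⟨by rw [List.length_take, hlen]; omega, hchain.prefix hpre,
      hnd.sublist hpre.sublist⟩
  · -- fibers
    intro b hb
    rw [mem_extFin] at hb
    obtain ⟨hblen, hbchain, hbnd⟩ := hb
    obtain ⟨q₀, x, y, hxy⟩ := two_last (o :: b) (by simp; omega)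
    have hq : ([o] ++ b : List V) = q₀ ++ [x, y] := by simpa using hxy
    have hcard := card_extFin_pair hG hcyc hreg q₀ x y (hq ▸ hbchain) (hq ▸ hbnd)
    refine le_trans (Finset.card_le_card_of_injOn (fun t => t.drop (k - G.girth)) ?_ ?_) hcard
    · intro r hr
      rw [Finset.mem_coe, Finset.mem_filter] at hr
      obtain ⟨hr1, hr2⟩ := hr
      rw [mem_extFin] at hr1
      obtain ⟨hrlen, hrchain, hrnd⟩ := hr1
      rw [Finset.mem_coe, mem_extFin]
      have hr2' : r.take (k - G.girth) = b := hr2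
      have hsplit : (q₀ ++ [x, y]) ++ r.drop (k - G.girth) = [o] ++ r := by
        rw [← hq, ← hr2', List.append_assoc, List.take_append_drop]
      refine ⟨by rw [List.length_drop, hrlen]; omega, ?_, ?_⟩
      · rw [hsplit]; exact hrchain
      · rw [hsplit]; exact hrnd
    · intro r₁ h₁ r₂ h₂ hdrop
      simp only [Finset.coe_filter, Set.mem_setOf_eq] at h₁ h₂
      have e1 : r₁ = r₁.take (k - G.girth) ++ r₁.drop (k - G.girth) :=
        (List.take_append_drop _ _).symm
      have e2 : r₂ = r₂.take (k - G.girth) ++ r₂.drop (k - G.girth) :=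
        (List.take_append_drop _ _).symm
      have hdrop' : r₁.drop (k - G.girth) = r₂.drop (k - G.girth) := hdrop
      rw [e1, e2, h₁.2, h₂.2, hdrop']

lemma main_bound (hd : 3 ≤ d) (hG : ∀ u v : V, ∃ φ : G ≃g G, φ u = v)
    (hcyc : ¬ G.IsAcyclic) (hreg : SawRegular G d) (o : V) :
    ∀ k : ℕ, 1 ≤ k → ((extFin G [o] k).card : ℝ) ≤
      (d : ℝ) * ((d : ℝ) - 1) ^ (k - 1) *
        (1 - (((d : ℝ) - 1)⁻¹) ^ G.girth) ^ (k / G.girth) := by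
  have hg3 : 3 ≤ G.girth := SimpleGraph.three_le_girth hcyc
  set g := G.girth with hgdef
  set D : ℝ := (d : ℝ) - 1 with hD
  have hD2 : (2 : ℝ) ≤ D := by
    rw [hD]
    have : (3 : ℝ) ≤ (d : ℝ) := by exact_mod_cast hd
    linarith
  have hDpos : (0 : ℝ) < D := by linarith
  have hDne : D ≠ 0 := ne_of_gt hDpos
  have hDcast : ((d - 1 : ℕ) : ℝ) = D := by
    rw [hD]; push_cast [Nat.cast_sub (by omega : 1 ≤ d)]; ring
  set y : ℝ := 1 - (D⁻¹) ^ g with hy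
  have hy0 : 0 ≤ y := by
    rw [hy]
    have h1 : (D⁻¹) ^ g ≤ 1 := by
      apply pow_le_one₀ (by positivity)
      rw [inv_le_one_iff₀]; right; linarith
    linarith
  have hDgy : D ^ g * y = D ^ g - 1 := by
    rw [hy]
    have : D ^ g * (D⁻¹) ^ g = 1 := by
      rw [← mul_pow, mul_inv_cancel₀ hDne, one_pow]
    rw [mul_sub, mul_one, this]
  have hDg1 : (1 : ℕ) ≤ (d - 1) ^ g := Nat.one_le_pow _ _ (by omega)
  have hcast1 : (((d - 1) ^ g - 1 : ℕ) : ℝ) = D ^ g - 1 := by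
    push_cast [Nat.cast_sub hDg1, hDcast]
    ring
  intro k
  induction k using Nat.strong_induction_on with
  | _ k ih =>
    intro hk
    rcases lt_trichotomy k g with hlt | heq | hgt
    · -- k < g
      rw [Nat.div_eq_of_lt hlt, pow_zero, mul_one]
      calc ((extFin G [o] k).card : ℝ) ≤ ((d * (d - 1) ^ (k - 1) : ℕ) : ℝ) := by
            exact_mod_cast base_card hreg o k hk
        _ = (d : ℝ) * D ^ (k - 1) := by push_cast [hDcast]; ring
    · -- k = g
      subst heq
      rw [Nat.div_self (by omega : 0 < g), pow_one]
      have h2le : 2 ≤ d * (d - 1) ^ (g - 1) := by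
        have h1 : 1 ≤ (d - 1) ^ (g - 1) := Nat.one_le_pow _ _ (by omega)
        calc 2 ≤ d * 1 := by omega
          _ ≤ d * (d - 1) ^ (g - 1) := Nat.mul_le_mul_left d h1
      calc ((extFin G [o] g).card : ℝ)
          ≤ ((d * (d - 1) ^ (g - 1) - 2 : ℕ) : ℝ) := by
            exact_mod_cast card_extFin_single hG hcyc hreg o
        _ = (d : ℝ) * D ^ (g - 1) - 2 := by
            push_cast [Nat.cast_sub h2le, hDcast]
            ring
        _ ≤ (d : ℝ) * D ^ (g - 1) * y := by
            rw [hy]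
            have hkey : (d : ℝ) * D ^ (g - 1) * (D⁻¹) ^ g = d / D := by
              rw [inv_pow]
              rw [show g = (g - 1) + 1 by omega, pow_succ]
              field_simp
              ring_nf
              rw [show 1 + (g - 1) - 1 = g - 1 by omega]
            have hdD : (d : ℝ) / D ≤ 2 := by
              rw [div_le_iff₀ hDpos, hD]
              have : (3 : ℝ) ≤ (d : ℝ) := by exact_mod_cast hd
              linarith
            have hexpand : (d : ℝ) * D ^ (g - 1) * (1 - (D⁻¹) ^ g)
                = (d : ℝ) * D ^ (g - 1) - (d : ℝ) * D ^ (g - 1) * (D⁻¹) ^ g := by ring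
            rw [hexpand, hkey]
            linarith
    · -- k > g
      have hk' : g + 1 ≤ k := hgt
      have ihkg := ih (k - g) (by omega) (by omega)
      have hstep := step_card hG hcyc hreg o k hk'
      have hdiv : k / g = (k - g) / g + 1 := Nat.div_eq_sub_div (by omega) (by omega)
      calc ((extFin G [o] k).card : ℝ)
          ≤ (((d - 1) ^ g - 1 : ℕ) : ℝ) * ((extFin G [o] (k - g)).card : ℝ) := by
            exact_mod_cast hstep
        _ ≤ (D ^ g - 1) * ((d : ℝ) * D ^ (k - g - 1) * y ^ ((k - g) / g)) := by
            rw [hcast1]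
            refine mul_le_mul_of_nonneg_left ihkg ?_
            have : (1 : ℝ) ≤ D ^ g := one_le_pow₀ (by linarith)
            linarith
        _ = (d : ℝ) * D ^ (k - 1) * y ^ (k / g) := by
            rw [← hDgy, hdiv, pow_succ]
            have hexp : D ^ g * D ^ (k - g - 1) = D ^ (k - 1) := by
              rw [← pow_add]
              congr 1
              omega
            calc D ^ g * y * ((d : ℝ) * D ^ (k - g - 1) * y ^ ((k - g) / g))
                = (d : ℝ) * (D ^ g * D ^ (k - g - 1)) * (y ^ ((k - g) / g) * y) := by ring
              _ = (d : ℝ) * D ^ (k - 1) * (y ^ ((k - g) / g) * y) := by rw [hexp]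

end
end SawAux

namespace SawAux
section
variable {V : Type*} (G : SimpleGraph V) [Fintype V] [DecidableEq V] [DecidableRel G.Adj]

lemma sawCount_eq_extFin (o : V) (k : ℕ) :
    sawCount G o k = (extFin G [o] k).card := by
  have hset : {l : List V | IsSAWFrom G o l ∧ l.length = k + 1}
      = (fun t => o :: t) '' ↑(extFin G [o] k) := by
    ext l
    constructor
    · rintro ⟨⟨hhead, hchain, hnd⟩, hlen⟩
      cases l with
      | nil => simp at hhead
      | cons a t =>
        have ha : a = o := by simpa using hhead
        subst ha
        refine ⟨t, ?_, rfl⟩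
        rw [Finset.mem_coe, mem_extFin]
        exact ⟨by simpa using hlen, by simpa using hchain, by simpa using hnd⟩
    · rintro ⟨t, ht, rfl⟩
      rw [Finset.mem_coe, mem_extFin] at ht
      exact ⟨⟨rfl, by simpa using ht.2.1, by simpa using ht.2.2⟩, by simp [ht.1]⟩
  show Nat.card ↥{l : List V | IsSAWFrom G o l ∧ l.length = k + 1} = _
  rw [Nat.card_coe_set_eq, hset, Set.ncard_image_of_injective _ List.cons_injective,
    Set.ncard_coe_finset]

end
end SawAux


/-- For `d ≥ 3` and a finite vertex-transitive `d`-regular graph `G`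
containing a cycle, with girth `g`: for every vertex `o` and every `k ≥ 1`,
`|SAW_k(o,G)| ≤ d(d−1)^{k−1} (1 − (d−1)^{−g})^{⌊k/g⌋}`. -/
theorem sawCount_upper_bound_girth (d : ℕ) (hd : 3 ≤ d)
    {V : Type*} [Fintype V] (G : SimpleGraph V)
    (hG : G.VertexTransitive) (hreg : SawRegular G d) (hcyc : ¬ G.IsAcyclic)
    (o : V) (k : ℕ) (hk : 1 ≤ k) :
    (sawCount G o k : ℝ) ≤
      (d : ℝ) * ((d : ℝ) - 1) ^ (k - 1) *
        (1 - (((d : ℝ) - 1)⁻¹) ^ G.girth) ^ (k / G.girth) := by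
  classical
  rw [SawAux.sawCount_eq_extFin]
  exact SawAux.main_bound hd hG hcyc hreg o k hk
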